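/- arXiv:1803.06194 — 6 statements merged into one kernel-verified Lean document; each statement's English description precedes it below -/
import Mathlib

section
/- Let R be a finite-dimensional real division algebra equipped with an involution γ (an ℝ-linear anti-automorphism with γ∘γ = id, i.e. R is a star ring and a star module over ℝ with γ = star) such that γ(a)·a = a·γ(a) and γ(a)·a lies in ℝ·1 for every a ∈ R. Then every monic polynomial C ∈ R[t] of degree n ≥ 1 that has no nonconstant monic real polynomial factor (i.e. no monic F ∈ ℝ[t] with deg F ≥ 1 whose image in R[t] divides C) admits a factorization C = (t − h₁)(t − h₂) ⋯ (t − hₙ) with h₁, …, hₙ ∈ R. -/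
open Polynomial


namespace DAF

variable {R : Type*} [Ring R] [StarRing R]

/-- coefficientwise star on polynomials -/
noncomputable def sbar (f : R[X]) : R[X] :=
  ⟨⟨f.toFinsupp.coeff.mapRange star (star_zero R)⟩⟩

@[simp] lemma coeff_sbar (f : R[X]) (n : ℕ) : (sbar f).coeff n = star (f.coeff n) := by
  rcases f with ⟨f⟩
  simp [sbar, coeff]

lemma sbar_add (f g : R[X]) : sbar (f + g) = sbar f + sbar g := by
  ext n; simp

lemma sbar_mul (f g : R[X]) : sbar (f * g) = sbar g * sbar f := by
  ext n
  rw [coeff_sbar, coeff_mul, coeff_mul]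
  rw [← Finset.HasAntidiagonal.map_swap_antidiagonal, Finset.sum_map]
  simp [star_sum, star_mul]

@[simp] lemma sbar_sbar (f : R[X]) : sbar (sbar f) = f := by
  ext n; simp

lemma sbar_support (f : R[X]) : (sbar f).support = f.support := by
  ext n; simp [mem_support_iff]

lemma sbar_degree (f : R[X]) : (sbar f).degree = f.degree := by
  unfold degree
  rw [sbar_support]

lemma sbar_natDegree (f : R[X]) : (sbar f).natDegree = f.natDegree :=
  natDegree_eq_of_degree_eq (sbar_degree f)

lemma sbar_leadingCoeff (f : R[X]) : (sbar f).leadingCoeff = star f.leadingCoeff := by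
  rw [leadingCoeff, leadingCoeff, sbar_natDegree, coeff_sbar]

lemma sbar_monic {f : R[X]} (hf : f.Monic) : (sbar f).Monic := by
  unfold Monic
  rw [sbar_leadingCoeff, hf.leadingCoeff, star_one]

@[simp] lemma sbar_eq_zero_iff {f : R[X]} : sbar f = 0 ↔ f = 0 := by
  constructor
  · intro h
    ext n
    have := congrArg (fun g => Polynomial.coeff g n) h
    simpa using this
  · rintro rfl; ext n; simp

end DAF

namespace DAF

variable {R : Type*} [DivisionRing R] [Algebra ℝ R] [StarRing R] [StarModule ℝ R]

lemma star_algebraMap' (x : ℝ) : star (algebraMap ℝ R x) = algebraMap ℝ R x := by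
  rw [← algebraMap_star_comm, star_trivial]

omit [StarModule ℝ R] in
lemma htr (hreal : ∀ a : R, ∃ r : ℝ, star a * a = algebraMap ℝ R r) (a : R) :
    ∃ r : ℝ, a + star a = algebraMap ℝ R r := by
  obtain ⟨r1, h1⟩ := hreal (a + 1)
  obtain ⟨r2, h2⟩ := hreal a
  refine ⟨r1 - r2 - 1, ?_⟩
  have key : star a * a + (a + star a) + 1 = algebraMap ℝ R r1 := by
    rw [← h1]; rw [star_add, star_one]; noncomm_ring
  have : (a + star a) = algebraMap ℝ R r1 - algebraMap ℝ R r2 - 1 := by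
    rw [← h2, ← key]; noncomm_ring
  rw [this, map_sub, map_sub, map_one]

omit [StarModule ℝ R] in
lemma hfix (hreal : ∀ a : R, ∃ r : ℝ, star a * a = algebraMap ℝ R r) {a : R}
    (ha : star a = a) : ∃ r : ℝ, a = algebraMap ℝ R r := by
  obtain ⟨r, hr⟩ := htr hreal a
  rw [ha] at hr
  refine ⟨r / 2, ?_⟩
  have h2R : (2 : R) = algebraMap ℝ R 2 := (map_ofNat (algebraMap ℝ R) 2).symm
  have h2 : (2 : R) ≠ 0 := by
    rw [h2R]
    simpa using (algebraMap ℝ R).injective.ne (two_ne_zero (α := ℝ))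
  apply mul_left_cancel₀ h2
  rw [two_mul, hr, h2R, ← map_mul]
  congr 1
  ring

omit [StarRing R] [StarModule ℝ R] in
lemma commute_C_alg (x : ℝ) (g : R[X]) : Commute (C (algebraMap ℝ R x)) g := by
  show _ = _
  ext n
  simp [coeff_C_mul, coeff_mul_C, Algebra.commutes]

omit [StarRing R] [StarModule ℝ R] in
lemma commute_map_real (p : ℝ[X]) (g : R[X]) : Commute (p.map (algebraMap ℝ R)) g := by
  induction p using Polynomial.induction_on' with
  | add u v hu hv => rw [Polynomial.map_add]; exact hu.add_left hv
  | monomial n r =>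
      rw [Polynomial.map_monomial, ← C_mul_X_pow_eq_monomial]
      exact (commute_C_alg r g).mul_left ((show Commute X g from X_mul).pow_left n)

omit [StarRing R] [StarModule ℝ R] in
lemma lift_real (P : R[X]) (h : ∀ i, ∃ r : ℝ, P.coeff i = algebraMap ℝ R r) :
    ∃ Pr : ℝ[X], Pr.map (algebraMap ℝ R) = P := by
  choose r hr using h
  refine ⟨∑ i ∈ P.support, Polynomial.monomial i (r i), ?_⟩
  rw [Polynomial.map_sum]
  conv_rhs => rw [P.as_sum_support]
  refine Finset.sum_congr rfl fun i _ => ?_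
  rw [Polynomial.map_monomial, ← hr]

lemma sbar_map_real (q : ℝ[X]) :
    sbar (q.map (algebraMap ℝ R)) = q.map (algebraMap ℝ R) := by
  ext n
  rw [coeff_sbar, coeff_map, star_algebraMap']

lemma exists_linear_right_factor
    (hreal : ∀ a : R, ∃ r : ℝ, star a * a = algebraMap ℝ R r)
    (f : R[X]) (hmon : f.Monic) (hdeg : 1 ≤ f.natDegree)
    (hmrpf : ¬ ∃ M : Polynomial ℝ, M.Monic ∧ 1 ≤ M.degree ∧
      M.map (algebraMap ℝ R) ∣ f) :
    ∃ (W : R[X]) (h : R), f = W * (X - Polynomial.C h) := by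
  have hinj : Function.Injective (algebraMap ℝ R) := (algebraMap ℝ R).injective
  -- the norm polynomial N = sbar f * f has real coefficients
  have hNmon : (sbar f * f).Monic := (sbar_monic hmon).mul hmon
  have hNfix : sbar (sbar f * f) = sbar f * f := by rw [sbar_mul, sbar_sbar]
  obtain ⟨Nr, hNr⟩ := lift_real (sbar f * f) (fun i => by
    apply hfix hreal
    have := congrArg (fun g : R[X] => g.coeff i) hNfix
    simpa using this)
  have hNnd : (sbar f * f).natDegree = 2 * f.natDegree := by
    rw [natDegree_mul' (by rw [(sbar_monic hmon).leadingCoeff, hmon.leadingCoeff]; simp),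
      sbar_natDegree]
    ring
  have hNrnd : Nr.natDegree = 2 * f.natDegree := by
    rw [← natDegree_map_eq_of_injective hinj Nr, hNr, hNnd]
  have hNrnotunit : ¬ IsUnit Nr := by
    intro hu
    have h0 := natDegree_eq_zero_of_isUnit hu
    omega
  obtain ⟨p, hpmon, hpirr, hpdvd⟩ := Polynomial.exists_monic_irreducible_factor Nr hNrnotunit
  have hp1 : 0 < p.natDegree := hpirr.natDegree_pos
  have hp2 : p.natDegree ≤ 2 := hpirr.natDegree_le_two
  have hPmon : (p.map (algebraMap ℝ R)).Monic := hpmon.map _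
  have hPnd : (p.map (algebraMap ℝ R)).natDegree = p.natDegree :=
    natDegree_map_eq_of_injective hinj p
  have hPdeg : (p.map (algebraMap ℝ R)).degree = p.degree :=
    degree_map_eq_of_injective hinj p
  set P : R[X] := p.map (algebraMap ℝ R) with hP
  set r : R[X] := f %ₘ P with hrdef
  set Q : R[X] := f /ₘ P with hQdef
  have hfeq : r + P * Q = f := modByMonic_add_div f P
  have hrdeg : r.degree < P.degree := degree_modByMonic_lt f hPmon
  have hpdeg1 : (1 : WithBot ℕ) ≤ p.degree := by
    rw [degree_eq_natDegree hpirr.ne_zero]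
    exact_mod_cast hp1
  by_cases hr0 : r = 0
  · exact absurd ⟨p, hpmon, hpdeg1, (modByMonic_eq_zero_iff_dvd hPmon).mp hr0⟩ hmrpf
  -- now r ≠ 0
  have hsr0 : sbar r ≠ 0 := fun h => hr0 (sbar_eq_zero_iff.mp h)
  have hlcM : (sbar r).leadingCoeff * r.leadingCoeff ≠ 0 := by
    rw [sbar_leadingCoeff]
    intro h
    rcases mul_eq_zero.mp h with h' | h'
    · exact hr0 (leadingCoeff_eq_zero.mp (by simpa using congrArg star h'))
    · exact hr0 (leadingCoeff_eq_zero.mp h')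
  have hM0 : sbar r * r ≠ 0 := by
    intro h
    have hd := degree_mul' hlcM
    rw [h, degree_zero] at hd
    rcases WithBot.add_eq_bot.mp hd.symm with h' | h'
    · exact hsr0 (degree_eq_bot.mp h')
    · exact hr0 (degree_eq_bot.mp h')
  have hMnd : (sbar r * r).natDegree = 2 * r.natDegree := by
    rw [natDegree_mul' hlcM, sbar_natDegree]; ring
  have hMfix : sbar (sbar r * r) = sbar r * r := by rw [sbar_mul, sbar_sbar]
  obtain ⟨Mr, hMr⟩ := lift_real (sbar r * r) (fun i => by
    apply hfix hreal
    have := congrArg (fun g : R[X] => g.coeff i) hMfix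
    simpa using this)
  -- the key identity
  have c1 : ∀ g : R[X], P * g = g * P := fun g => (commute_map_real p g).eq
  have swap : ∀ A B : R[X], A * (P * B) = P * (A * B) := by
    intro A B
    rw [← mul_assoc, show A * P = P * A from (c1 A).symm, mul_assoc]
  have hsf : sbar f = sbar r + sbar Q * P := by
    conv_lhs => rw [← hfeq]
    rw [sbar_add, sbar_mul, sbar_map_real]
  have hKey : sbar f * f
      = P * (sbar r * Q + sbar Q * r + sbar Q * (P * Q)) + sbar r * r := by
    conv_lhs => rw [hsf, ← hfeq]
    calc (sbar r + sbar Q * P) * (r + P * Q)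
        = sbar r * (P * Q) + (sbar Q * (P * r) + sbar Q * (P * (P * Q))) + sbar r * r := by
          noncomm_ring
      _ = P * (sbar r * Q) + (P * (sbar Q * r) + P * (sbar Q * (P * Q))) + sbar r * r := by
          rw [swap, swap, swap]
      _ = _ := by noncomm_ring
  -- p divides Mr
  obtain ⟨kr, hkr⟩ := hpdvd
  have hNmap : sbar f * f = P * (kr.map (algebraMap ℝ R)) := by
    rw [← hNr, hkr, Polynomial.map_mul]
  have hMP : sbar r * r
      = P * (kr.map (algebraMap ℝ R)
          - (sbar r * Q + sbar Q * r + sbar Q * (P * Q))) := by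
    rw [mul_sub, ← hNmap, hKey]
    abel
  have hrem : Mr %ₘ p = 0 := by
    by_contra hne
    have heq : (Mr %ₘ p) + p * (Mr /ₘ p) = Mr := modByMonic_add_div Mr p
    have hmapeq : (Mr %ₘ p).map (algebraMap ℝ R)
        = P * ((kr.map (algebraMap ℝ R)
            - (sbar r * Q + sbar Q * r + sbar Q * (P * Q)))
            - (Mr /ₘ p).map (algebraMap ℝ R)) := by
      have h' := congrArg (Polynomial.map (algebraMap ℝ R)) heq
      rw [Polynomial.map_add, Polynomial.map_mul, hMr] at h'
      rw [mul_sub, ← hMP]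
      exact eq_sub_of_add_eq h'
    have hne' : (Mr %ₘ p).map (algebraMap ℝ R) ≠ 0 := fun h =>
      hne (Polynomial.map_injective _ hinj (by simpa using h))
    have hg0 : (kr.map (algebraMap ℝ R)
        - (sbar r * Q + sbar Q * r + sbar Q * (P * Q)))
        - (Mr /ₘ p).map (algebraMap ℝ R) ≠ 0 := by
      intro h; rw [h, mul_zero] at hmapeq; exact hne' hmapeq
    have hub : ((Mr %ₘ p).map (algebraMap ℝ R)).degree < P.degree := by
      rw [degree_map_eq_of_injective hinj, hPdeg]
      exact degree_modByMonic_lt Mr hpmon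
    have hlc2 : P.leadingCoeff * ((kr.map (algebraMap ℝ R)
        - (sbar r * Q + sbar Q * r + sbar Q * (P * Q)))
        - (Mr /ₘ p).map (algebraMap ℝ R)).leadingCoeff ≠ 0 := by
      rw [hPmon.leadingCoeff, one_mul]
      exact leadingCoeff_ne_zero.mpr hg0
    have hlb : P.degree ≤ ((Mr %ₘ p).map (algebraMap ℝ R)).degree := by
      rw [hmapeq, degree_mul' hlc2]
      exact le_add_of_nonneg_right (zero_le_degree_iff.mpr hg0)
    exact absurd (lt_of_le_of_lt hlb hub) (lt_irrefl _)
  have hpMr : p ∣ Mr := (modByMonic_eq_zero_iff_dvd hpmon).mp hrem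
  obtain ⟨c, hc⟩ := hpMr
  have hMr0 : Mr ≠ 0 := fun h => hM0 (by rw [← hMr, h, Polynomial.map_zero])
  have hc0 : c ≠ 0 := fun h => hMr0 (by rw [hc, h, mul_zero])
  have hndeq : p.natDegree + c.natDegree = 2 * r.natDegree := by
    rw [← Polynomial.natDegree_mul hpirr.ne_zero hc0, ← hc,
      ← hMnd, ← hMr, natDegree_map_eq_of_injective hinj]
  have hrP : r.natDegree < p.natDegree := by
    apply natDegree_lt_natDegree hr0
    rw [← hPdeg]; exact hrdeg
  have hrn1 : r.natDegree = 1 := by omega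
  have hcn0 : c.natDegree = 0 := by omega
  have ha0 : r.coeff 1 ≠ 0 := by
    have hlc : r.leadingCoeff ≠ 0 := leadingCoeff_ne_zero.mpr hr0
    rwa [leadingCoeff, hrn1] at hlc
  have hrXC : r = Polynomial.C (r.coeff 1) * X + Polynomial.C (r.coeff 0) := by
    apply eq_X_add_C_of_degree_le_one
    rw [degree_eq_natDegree hr0, hrn1]
    exact le_refl _
  obtain ⟨γ, hγ⟩ : ∃ γ : ℝ, c = Polynomial.C γ :=
    ⟨c.coeff 0, eq_C_of_natDegree_le_zero (le_of_eq hcn0)⟩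
  have hγ0 : γ ≠ 0 := fun h => hc0 (by rw [hγ, h, map_zero])
  have hMeq : sbar r * r = P * Polynomial.C (algebraMap ℝ R γ) := by
    rw [← hMr, hc, hγ, Polynomial.map_mul, map_C]
  have hPM : P = (sbar r * r) * Polynomial.C (algebraMap ℝ R γ⁻¹) := by
    rw [hMeq, mul_assoc, ← C_mul, ← map_mul, mul_inv_cancel₀ hγ0, map_one, C_1, mul_one]
  -- the root
  set h0 : R := -((r.coeff 1)⁻¹ * r.coeff 0) with hh0
  have hrfac : r = Polynomial.C (r.coeff 1) * (X - Polynomial.C h0) := by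
    rw [mul_sub, ← C_mul, hh0, mul_neg, ← mul_assoc, mul_inv_cancel₀ ha0, one_mul,
      C_neg, sub_neg_eq_add]
    exact hrXC
  have key2 : P * Q
      = Q * sbar r * Polynomial.C (algebraMap ℝ R γ⁻¹) * r := by
    rw [c1 Q, hPM]
    rw [show (sbar r * r) * Polynomial.C (algebraMap ℝ R γ⁻¹)
        = sbar r * Polynomial.C (algebraMap ℝ R γ⁻¹) * r by
      rw [mul_assoc, ← (commute_C_alg γ⁻¹ r).eq, ← mul_assoc]]
    rw [← mul_assoc, ← mul_assoc]
  refine ⟨Q * sbar r * Polynomial.C (algebraMap ℝ R γ⁻¹) * Polynomial.C (r.coeff 1)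
      + Polynomial.C (r.coeff 1), h0, ?_⟩
  rw [add_mul, mul_assoc, ← hrfac, ← key2, ← hfeq]
  abel

lemma main_aux
    (hreal : ∀ a : R, ∃ r : ℝ, star a * a = algebraMap ℝ R r) :
    ∀ (n : ℕ) (F : R[X]), F.Monic → F.natDegree = n →
      (¬ ∃ M : Polynomial ℝ, M.Monic ∧ 1 ≤ M.degree ∧ M.map (algebraMap ℝ R) ∣ F) →
      ∃ h : Fin n → R, F = (List.ofFn fun i => X - Polynomial.C (h i)).prod := by
  intro n
  induction n with
  | zero =>
      intro F hmon hdeg _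
      refine ⟨Fin.elim0, ?_⟩
      rw [hmon.natDegree_eq_zero.mp hdeg]
      simp
  | succ n ih =>
      intro F hmon hdeg hmrpf
      obtain ⟨W, h0, hW⟩ := exists_linear_right_factor hreal F hmon (by omega) hmrpf
      have hXm : (X - Polynomial.C h0).Monic := monic_X_sub_C h0
      have hWmon : W.Monic := hXm.of_mul_monic_right (by rw [← hW]; exact hmon)
      have hWnd : W.natDegree = n := by
        have hl : W.leadingCoeff * (X - Polynomial.C h0).leadingCoeff ≠ 0 := by
          rw [hWmon.leadingCoeff, hXm.leadingCoeff, one_mul]; exact one_ne_zero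
        have := natDegree_mul' hl
        rw [← hW, hdeg, natDegree_X_sub_C] at this
        omega
      have hWmrpf : ¬ ∃ M : Polynomial ℝ, M.Monic ∧ 1 ≤ M.degree ∧
          M.map (algebraMap ℝ R) ∣ W := by
        rintro ⟨M, h1, h2, g, hg⟩
        exact hmrpf ⟨M, h1, h2, g * (X - Polynomial.C h0), by
          rw [hW, hg, mul_assoc]⟩
      obtain ⟨g, hg⟩ := ih W hWmon hWnd hWmrpf
      refine ⟨Fin.snoc g h0, ?_⟩
      rw [List.ofFn_succ']
      simp only [Fin.snoc_castSucc, Fin.snoc_last, List.concat_eq_append, List.prod_append,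
        List.prod_cons, List.prod_nil, mul_one]
      rw [← hg, ← hW]

end DAF

/-- Over a finite-dimensional real division algebra whose involution `star` satisfies
`star a * a = a * star a ∈ ℝ·1`, every monic polynomial of degree `n ≥ 1` without a
nonconstant monic real polynomial factor splits into `n` monic linear factors. -/
theorem factorization_over_division_algebra {R : Type*} [DivisionRing R] [Algebra ℝ R]
    [FiniteDimensional ℝ R] [StarRing R] [StarModule ℝ R]
    (hcomm : ∀ a : R, star a * a = a * star a)
    (hreal : ∀ a : R, ∃ r : ℝ, star a * a = algebraMap ℝ R r)
    (F : Polynomial R) (n : ℕ) (hn : 1 ≤ n) (hdeg : F.natDegree = n) (hmonic : F.Monic)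
    (hmrpf : ¬ ∃ M : Polynomial ℝ, M.Monic ∧ 1 ≤ M.degree ∧
      M.map (algebraMap ℝ R) ∣ F) :
    ∃ h : Fin n → R,
      F = (List.ofFn fun i => X - Polynomial.C (h i)).prod := by
  exact DAF.main_aux hreal n F hmonic hdeg hmrpf
end

section
/- Let C = P + εQ be a monic motion polynomial in 𝔻ℍ[t] (P, Q ∈ ℍ[t]), and let M ∈ ℝ[t] be a monic real quadratic factor of ν(C) that is not a pseudofactor of C, i.e. S := lrem(C, M) satisfies ν(S) = S·S̄ ≠ 0. Then S is linear with invertible leading coefficient and has a unique right zero h ∈ 𝔻ℍ. -/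
open Polynomial DualNumber

/-- The dual quaternions `ℍ ⊕ εℍ` with `ε` central and `ε² = 0`. -/
abbrev DH : Type := DualNumber (Quaternion ℝ)

/-- Conjugation of a dual quaternion: quaternion conjugation in both components. -/
def dconj (x : DH) : DH := (star x.fst, star x.snd)

/-- Coefficientwise conjugation of a left polynomial over the dual quaternions. -/
noncomputable def dpconj (p : Polynomial DH) : Polynomial DH :=
  ⟨AddMonoidAlgebra.ofCoeff (Finsupp.mapRange dconj (by simp [dconj]; try rfl) p.toFinsupp.coeff)⟩

@[simp] lemma dh_pair_fst (a b : Quaternion ℝ) : TrivSqZeroExt.fst ((a, b) : DH) = a := rfl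
@[simp] lemma dh_pair_snd (a b : Quaternion ℝ) : TrivSqZeroExt.snd ((a, b) : DH) = b := rfl
@[simp] lemma dh_pair_add (a b c d : Quaternion ℝ) :
    TrivSqZeroExt.fst (@HAdd.hAdd DH DH DH _ (a, b) (c, d)) = a + c := rfl
@[simp] lemma dh_pair_add_snd (a b c d : Quaternion ℝ) :
    TrivSqZeroExt.snd (@HAdd.hAdd DH DH DH _ (a, b) (c, d)) = b + d := rfl
@[simp] lemma dh_mul_pair_fst (x : DH) (c d : Quaternion ℝ) :
    TrivSqZeroExt.fst (@HMul.hMul DH DH DH _ x (c, d)) = x.fst * c := rfl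
@[simp] lemma dh_mul_pair_snd (x : DH) (c d : Quaternion ℝ) :
    TrivSqZeroExt.snd (@HMul.hMul DH DH DH _ x (c, d)) = x.fst * d + x.snd * c := rfl
@[simp] lemma dh_pair_mul_fst (a b c d : Quaternion ℝ) :
    TrivSqZeroExt.fst (@HMul.hMul DH DH DH _ (a, b) (c, d)) = a * c := rfl
@[simp] lemma dh_pair_mul_snd (a b c d : Quaternion ℝ) :
    TrivSqZeroExt.snd (@HMul.hMul DH DH DH _ (a, b) (c, d)) = a * d + b * c := rfl

lemma dconj_zero : dconj 0 = 0 :=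
  TrivSqZeroExt.ext (by simp [dconj]) (by simp [dconj])
lemma dconj_add (x y : DH) : dconj (x + y) = dconj x + dconj y :=
  TrivSqZeroExt.ext (by simp [dconj]) (by simp [dconj])
lemma dconj_mul (x y : DH) : dconj (x * y) = dconj y * dconj x := by
  refine TrivSqZeroExt.ext ?_ ?_
  · simp [dconj, TrivSqZeroExt.fst_mul]
  · simp [dconj, TrivSqZeroExt.snd_mul, add_comm]
lemma dconj_dconj (x : DH) : dconj (dconj x) = x :=
  TrivSqZeroExt.ext (by simp [dconj]) (by simp [dconj])
lemma dconj_inj : Function.Injective dconj :=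
  Function.LeftInverse.injective dconj_dconj
lemma dconj_algebraMap (r : ℝ) : dconj (algebraMap ℝ DH r) = algebraMap ℝ DH r := by
  refine TrivSqZeroExt.ext ?_ ?_ <;>
    simp [dconj, TrivSqZeroExt.algebraMap_eq_inl']
lemma dpconj_coeff (p : Polynomial DH) (i : ℕ) : (dpconj p).coeff i = dconj (p.coeff i) := rfl
lemma dpconj_support (p : Polynomial DH) : (dpconj p).support = p.support := by
  have h0 : ∀ x, dconj x = 0 ↔ x = 0 := fun x => ⟨fun h => dconj_inj (h.trans dconj_zero.symm), fun h => h ▸ dconj_zero⟩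
  ext i; simp [dpconj_coeff, h0]
lemma dpconj_degree (p : Polynomial DH) : (dpconj p).degree = p.degree := by
  simp [Polynomial.degree, dpconj_support]

lemma dpconj_add (p q : Polynomial DH) : dpconj (p + q) = dpconj p + dpconj q :=
  Polynomial.ext fun n => by simp [dpconj_coeff, dconj_add]

lemma dconj_sum {α : Type*} (s : Finset α) (f : α → DH) :
    dconj (∑ i ∈ s, f i) = ∑ i ∈ s, dconj (f i) :=
  map_sum (AddMonoidHom.mk' dconj dconj_add) f s

lemma dpconj_mul (p q : Polynomial DH) : dpconj (p * q) = dpconj q * dpconj p := by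
  refine Polynomial.ext fun n => ?_
  rw [dpconj_coeff, coeff_mul, coeff_mul, dconj_sum,
    ← Finset.Nat.sum_antidiagonal_swap
      (f := fun x => (dpconj q).coeff x.1 * (dpconj p).coeff x.2)]
  exact Finset.sum_congr rfl fun x _ => by
    simp [dconj_mul, dpconj_coeff]

lemma dpconj_map (M : Polynomial ℝ) :
    dpconj (M.map (algebraMap ℝ DH)) = M.map (algebraMap ℝ DH) := by
  refine Polynomial.ext fun n => ?_
  rw [dpconj_coeff, coeff_map, dconj_algebraMap]

lemma map_comm (M : Polynomial ℝ) (p : Polynomial DH) :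
    M.map (algebraMap ℝ DH) * p = p * M.map (algebraMap ℝ DH) := by
  refine Polynomial.ext fun n => ?_
  rw [coeff_mul, coeff_mul,
    ← Finset.Nat.sum_antidiagonal_swap
      (f := fun x => p.coeff x.1 * (M.map (algebraMap ℝ DH)).coeff x.2)]
  refine Finset.sum_congr rfl fun x _ => ?_
  simp only [Prod.fst_swap, Prod.snd_swap, coeff_map]
  exact Algebra.commutes (M.coeff x.1) (p.coeff x.2)

set_option maxHeartbeats 2000000


/-- If `M` is a monic real quadratic factor of the norm polynomial of a monic motion
polynomial `F = P + εQ` which is not a pseudofactor of `F` (the remainder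
`S = lrem(F, M)` has nonvanishing norm), then `S` is linear with invertible leading
coefficient and has a unique right zero. -/
theorem motion_remainder_unique_zero (P Q : Polynomial (Quaternion ℝ)) (F : Polynomial DH)
    (hF : ∀ i, F.coeff i = (P.coeff i, Q.coeff i))
    (hFmonic : F.Monic)
    (hmotion : ∀ i, ∃ r : ℝ, (F * dpconj F).coeff i = algebraMap ℝ DH r)
    (hne : F * dpconj F ≠ 0)
    (M : Polynomial ℝ) (hM : M.Monic) (hMdeg : M.degree = 2)
    (hdvd : M.map (algebraMap ℝ DH) ∣ F * dpconj F)
    (Qd S : Polynomial DH)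
    (hrem : F = Qd * M.map (algebraMap ℝ DH) + S) (hSdeg : S.degree < 2)
    (hnu : S * dpconj S ≠ 0) :
    S.degree = 1 ∧ IsUnit S.leadingCoeff ∧ ∃! h : DH, S.eval h = 0 := by
  set M' : Polynomial DH := M.map (algebraMap ℝ DH) with hM'def
  have hM'monic : M'.Monic := hM.map _
  have hM'deg : M'.degree = 2 := by rw [hM.degree_map]; exact hMdeg
  -- S and dpconj S in terms of F
  have hS : S = F - Qd * M' := by rw [hrem]; exact (add_sub_cancel_left _ _).symm
  have hdF : dpconj F = M' * dpconj Qd + dpconj S := by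
    rw [hrem, dpconj_add, dpconj_mul, dpconj_map]
  have hdS : dpconj S = dpconj F - M' * dpconj Qd := by
    rw [hdF]; exact (add_sub_cancel_left _ _).symm
  -- M' divides S * dpconj S
  obtain ⟨G, hG⟩ := hdvd
  have hdvd2 : S * dpconj S =
      M' * (G - F * dpconj Qd - Qd * dpconj F + Qd * (M' * dpconj Qd)) := by
    have c1 : F * (M' * dpconj Qd) = M' * (F * dpconj Qd) := by
      rw [← mul_assoc, ← map_comm, mul_assoc]
    have c2 : Qd * M' * dpconj F = M' * (Qd * dpconj F) := by
      rw [← map_comm, mul_assoc]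
    have c3 : Qd * M' * (M' * dpconj Qd) = M' * (Qd * (M' * dpconj Qd)) := by
      rw [← map_comm, mul_assoc]
    rw [hdS, hS]
    simp only [sub_mul, mul_sub, mul_add]
    rw [hG, c1, c2, c3]
    abel
  set T : Polynomial DH := G - F * dpconj Qd - Qd * dpconj F + Qd * (M' * dpconj Qd) with hTdef
  have hT : S * dpconj S = T * M' := by rw [hdvd2, map_comm]
  have hT0 : T ≠ 0 := by
    intro h; exact hnu (by rw [hT, h, zero_mul])
  -- degree bookkeeping
  have hS1 : S.degree ≤ 1 := by
    by_cases h : S = 0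
    · simp [h]
    · rw [degree_eq_natDegree h] at hSdeg ⊢
      exact_mod_cast Nat.lt_succ_iff.mp (by exact_mod_cast hSdeg)
  have hprod2 : (S * dpconj S).degree ≤ 2 := by
    refine le_trans (degree_mul_le _ _) ?_
    rw [dpconj_degree]
    calc S.degree + S.degree ≤ 1 + 1 := add_le_add hS1 hS1
    _ = 2 := by norm_num
  have hTdeg : T.degree ≤ 0 := by
    have hlc : T.leadingCoeff * M'.leadingCoeff ≠ 0 := by
      rw [hM'monic.leadingCoeff, mul_one]
      exact leadingCoeff_ne_zero.mpr hT0
    have hd : (S * dpconj S).degree = T.degree + 2 := by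
      rw [hT, degree_mul' hlc, hM'deg]
    rw [hd] at hprod2
    rw [degree_eq_natDegree hT0] at hprod2 ⊢
    have : (T.natDegree : ℕ) + 2 ≤ 2 := by exact_mod_cast hprod2
    exact_mod_cast Nat.le_of_add_le_add_right (by omega : T.natDegree + 2 ≤ 0 + 2)
  have hTC : T = C (T.coeff 0) := eq_C_of_degree_le_zero hTdeg
  set w : DH := T.coeff 0 with hwdef
  have hw0 : w ≠ 0 := by
    intro h
    exact hT0 (by rw [hTC, h, map_zero])
  -- coefficient 2 computation
  have hS2 : S.coeff 2 = 0 := coeff_eq_zero_of_degree_lt (by exact_mod_cast hSdeg)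
  set a : DH := S.coeff 1 with hadef
  set b : DH := S.coeff 0 with hbdef
  have hMc2 : M'.coeff 2 = 1 := by
    rw [hM'def, coeff_map]
    have : M.coeff 2 = 1 := by
      have h2 : M.natDegree = 2 := natDegree_eq_of_degree_eq_some hMdeg
      have := hM.coeff_natDegree
      rwa [h2] at this
    rw [this, map_one]
  have hcoeff2 : a * dconj a = w := by
    have h := congrArg (fun p => p.coeff 2) hT
    rw [coeff_mul, coeff_mul] at h
    rw [Finset.Nat.sum_antidiagonal_eq_sum_range_succ_mk,
      Finset.Nat.sum_antidiagonal_eq_sum_range_succ_mk] at h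
    simp only [Finset.sum_range_succ, Finset.sum_range_zero] at h
    rw [hTC] at h
    simp only [dpconj_coeff, hS2, coeff_C] at h
    simpa [hMc2, ← hadef, ← hwdef, dconj_zero] using h
  -- a has invertible first component
  have hafst : a.fst ≠ 0 := by
    intro h0
    apply hw0
    rw [← hcoeff2]
    refine TrivSqZeroExt.ext ?_ ?_
    · simp [dconj, TrivSqZeroExt.fst_mul, h0]
    · simp [dconj, TrivSqZeroExt.snd_mul, h0]
  have ha0 : a ≠ 0 := fun h => hafst (by rw [h]; rfl)
  have haunit : IsUnit a :=
    TrivSqZeroExt.isUnit_iff_isUnit_fst.mpr (isUnit_iff_ne_zero.mpr hafst)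
  have hdeg1 : S.degree = 1 :=
    le_antisymm hS1 (le_degree_of_ne_zero ha0)
  have hdeg1' : S.degree = (1 : ℕ) := by exact_mod_cast hdeg1
  have hlead : S.leadingCoeff = a := by
    rw [leadingCoeff, natDegree_eq_of_degree_eq_some hdeg1']
  -- representation S = C a * X + C b
  have hSrepr : S = C a * X + C b := by
    refine Polynomial.ext fun n => ?_
    rcases n with _ | _ | n
    · simp [coeff_C, hbdef]
    · simp [coeff_C, hadef]
    · have h0 : S.coeff (n + 2) = 0 := coeff_eq_zero_of_degree_lt (by
        rw [hdeg1']; exact_mod_cast (by omega : 1 < n + 2))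
      simp [h0, coeff_C, coeff_X]
  have heval : ∀ h : DH, S.eval h = a * h + b := by
    intro h
    rw [hSrepr]
    simp [eval_add, eval_C_mul, eval_X, eval_C]
  obtain ⟨u, hu⟩ := haunit
  refine ⟨hdeg1, by rw [hlead]; exact ⟨u, hu⟩, ?_⟩
  have hcancel : a * -(↑u⁻¹ * b) = -b := by
    rw [← hu, mul_neg, ← mul_assoc, Units.mul_inv, one_mul]
  refine ⟨-(↑u⁻¹ * b), ?_, ?_⟩
  · show S.eval (-(↑u⁻¹ * b)) = 0
    rw [heval, hcancel, neg_add_cancel]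
  · intro y hy
    rw [heval] at hy
    have hy' : a * y = -b := eq_neg_of_add_eq_zero_left hy
    exact (IsUnit.mul_left_cancel ⟨u, hu⟩) (hy'.trans hcancel.symm)
end

section
/- Let C = c₂t² + c₁t + c₀ be a quadratic polynomial over the split quaternions 𝕊 such that c₂ is invertible (N(c₂) ≠ 0) and c₀, c₁, c₂ are linearly independent over ℝ. Then C admits a factorization C = c₂(t − h₁)(t − h₂) with h₁, h₂ ∈ 𝕊. -/
open Polynomial Quaternion

/-- The split quaternions: `𝐢² = 𝐣² = 1`, `𝐤 = 𝐢𝐣`, `𝐤² = -1`. -/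
abbrev SplitQuat : Type := QuaternionAlgebra ℝ 1 0 1

namespace SQ

noncomputable section


lemma depressed_factor (Pp Qq Rr : ℝ) :
    ∃ B C C' : ℝ, C + C' - B^2 = Pp ∧ B*(C' - C) = Qq ∧ C*C' = Rr := by
  by_cases hQ : Qq = 0
  · by_cases hdisc : 0 ≤ Pp^2 - 4*Rr
    · have hs : Real.sqrt (Pp^2-4*Rr) ^ 2 = Pp^2 - 4*Rr := Real.sq_sqrt hdisc
      refine ⟨0, (Pp + Real.sqrt (Pp^2-4*Rr))/2, (Pp - Real.sqrt (Pp^2-4*Rr))/2, by ring, by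
        rw [hQ]; ring, by linear_combination (-1/4 : ℝ) * hs⟩
    · push_neg at hdisc
      have hR : 0 < Rr := by nlinarith [sq_nonneg Pp]
      have hs : Real.sqrt Rr ^ 2 = Rr := Real.sq_sqrt hR.le
      have hsn : 0 ≤ Real.sqrt Rr := Real.sqrt_nonneg Rr
      have h2 : 0 ≤ 2*Real.sqrt Rr - Pp := by nlinarith
      have hB : Real.sqrt (2*Real.sqrt Rr - Pp) ^ 2 = 2*Real.sqrt Rr - Pp := Real.sq_sqrt h2
      refine ⟨Real.sqrt (2*Real.sqrt Rr - Pp), Real.sqrt Rr, Real.sqrt Rr, by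
        linear_combination -hB, by rw [hQ]; ring, by linear_combination hs⟩
  · -- cubic resolvent via IVT
    set f : ℝ → ℝ := fun u => u^3 + 2*Pp*u^2 + (Pp^2-4*Rr)*u - Qq^2 with hfdef
    have hf0 : f 0 < 0 := by
      simp only [hfdef]
      have : 0 < Qq^2 := by positivity
      nlinarith
    set M : ℝ := 1 + |2*Pp| + |Pp^2-4*Rr| + Qq^2 with hMdef
    have hM1 : 1 ≤ M := by
      have := abs_nonneg (2*Pp); have := abs_nonneg (Pp^2-4*Rr); have := sq_nonneg Qq
      nlinarith
    have hM0 : (0:ℝ) ≤ M := by linarith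
    have hfM : 0 < f M := by
      simp only [hfdef]
      have h1 : -(2*Pp) ≤ |2*Pp| := neg_le_abs _
      have h2 : -(Pp^2-4*Rr) ≤ |Pp^2-4*Rr| := neg_le_abs _
      have h3 : 0 ≤ |2*Pp| := abs_nonneg _
      have h4 : 0 ≤ |Pp^2-4*Rr| := abs_nonneg _
      have h5 : 0 ≤ Qq^2 := sq_nonneg _
      have hMM : M ≤ M^2 := by nlinarith
      have key : M^3 = M^2 * (1 + |2*Pp| + |Pp^2-4*Rr| + Qq^2) := by rw [hMdef]; ring
      nlinarith [mul_le_mul_of_nonneg_left h1 (sq_nonneg M), sq_nonneg M,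
        mul_nonneg h4 (by nlinarith : (0:ℝ) ≤ M^2 - M),
        mul_nonneg h5 (by nlinarith : (0:ℝ) ≤ M^2 - 1)]
    have hcont : ContinuousOn f (Set.Icc 0 M) := by
      apply Continuous.continuousOn; simp only [hfdef]; continuity
    have hmem : (0:ℝ) ∈ Set.Icc (f 0) (f M) := ⟨hf0.le, hfM.le⟩
    obtain ⟨u, hu, hfu⟩ := intermediate_value_Icc hM0 hcont hmem
    have hu0 : 0 < u := by
      rcases hu.1.lt_or_eq with h | h
      · exact h
      · exfalso; rw [← h] at hfu; exact hf0.ne hfu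
    set B := Real.sqrt u with hBdef
    have hB2 : B^2 = u := Real.sq_sqrt hu0.le
    have hBpos : 0 < B := Real.sqrt_pos.mpr hu0
    have hBne : B ≠ 0 := hBpos.ne'
    have hres : B^2*(Pp+B^2)^2 - 4*Rr*B^2 - Qq^2 = 0 := by
      rw [hB2]
      have : u^3 + 2*Pp*u^2 + (Pp^2-4*Rr)*u - Qq^2 = 0 := hfu
      linear_combination this
    refine ⟨B, (Pp + B^2 - Qq/B)/2, (Pp + B^2 + Qq/B)/2, by ring, ?_, ?_⟩
    · field_simp
      ring
    · field_simp
      linear_combination hres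

lemma quartic_factor (a3 a2 a1 a0 : ℝ) :
    ∃ b c b' c' : ℝ, b + b' = a3 ∧ c + c' + b*b' = a2 ∧ b*c' + b'*c = a1 ∧ c*c' = a0 := by
  obtain ⟨B, C, C', hP, hQ, hR⟩ := depressed_factor (a2 - 3*a3^2/8)
    (a1 - a2*a3/2 + a3^3/8) (a0 - a1*a3/4 + a2*a3^2/16 - 3*a3^4/256)
  refine ⟨B + a3/2, C + B*a3/4 + a3^2/16, -B + a3/2, C' - B*a3/4 + a3^2/16, by ring, ?_, ?_, ?_⟩
  · linear_combination hP
  · linear_combination (a3/2) * hP + hQ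
  · linear_combination (a3^2/16) * hP + (a3/4) * hQ + hR

lemma dich (v0 v1 v2 v3 w0 w1 w2 w3 : ℝ)
    (h1 : v0^2 - v1^2 - v2^2 + v3^2 = 0) (h2 : w0^2 - w1^2 - w2^2 + w3^2 = 0)
    (h3 : v0*w0 - v1*w1 - v2*w2 + v3*w3 = 0) :
    ((v3*w3 + (-1)*v2*w2 + (-1)*v1*w1 + v0*w0 : ℝ) = 0 ∧ ((-1)*v3*w2 + v2*w3 + (-1)*v1*w0 + v0*w1 : ℝ) = 0 ∧ (v3*w1 + (-1)*v2*w0 + (-1)*v1*w3 + v0*w2 : ℝ) = 0 ∧ ((-1)*v3*w0 + v2*w1 + (-1)*v1*w2 + v0*w3 : ℝ) = 0) ∨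
    (((-1)*v3*w3 + v2*w2 + v1*w1 + (-1)*v0*w0 : ℝ) = 0 ∧ (v3*w2 + (-1)*v2*w3 + (-1)*v1*w0 + v0*w1 : ℝ) = 0 ∧ ((-1)*v3*w1 + (-1)*v2*w0 + v1*w3 + v0*w2 : ℝ) = 0 ∧ ((-1)*v3*w0 + (-1)*v2*w1 + v1*w2 + v0*w3 : ℝ) = 0) := by
  by_cases hA0 : (v3*w3 + (-1)*v2*w2 + (-1)*v1*w1 + v0*w0 : ℝ) = 0
  case neg =>
    refine Or.inr ⟨?_, ?_, ?_, ?_⟩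
    · have hp : (v3*w3 + (-1)*v2*w2 + (-1)*v1*w1 + v0*w0) * ((-1)*v3*w3 + v2*w2 + v1*w1 + (-1)*v0*w0) = 0 := by linear_combination ((-1)*v3*w3 + v2*w2 + v1*w1 + (-1)*v0*w0) * h3
      exact (mul_eq_zero.mp hp).resolve_left hA0
    · have hp : (v3*w3 + (-1)*v2*w2 + (-1)*v1*w1 + v0*w0) * (v3*w2 + (-1)*v2*w3 + (-1)*v1*w0 + v0*w1) = 0 := by linear_combination (v3*w2 + (-1)*v2*w3 + (-1)*v1*w0 + v0*w1) * h3
      exact (mul_eq_zero.mp hp).resolve_left hA0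
    · have hp : (v3*w3 + (-1)*v2*w2 + (-1)*v1*w1 + v0*w0) * ((-1)*v3*w1 + (-1)*v2*w0 + v1*w3 + v0*w2) = 0 := by linear_combination ((-1)*v3*w1 + (-1)*v2*w0 + v1*w3 + v0*w2) * h3
      exact (mul_eq_zero.mp hp).resolve_left hA0
    · have hp : (v3*w3 + (-1)*v2*w2 + (-1)*v1*w1 + v0*w0) * ((-1)*v3*w0 + (-1)*v2*w1 + v1*w2 + v0*w3) = 0 := by linear_combination ((-1)*v3*w0 + (-1)*v2*w1 + v1*w2 + v0*w3) * h3
      exact (mul_eq_zero.mp hp).resolve_left hA0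
  case pos =>
    by_cases hA1 : ((-1)*v3*w2 + v2*w3 + (-1)*v1*w0 + v0*w1 : ℝ) = 0
    case neg =>
      refine Or.inr ⟨?_, ?_, ?_, ?_⟩
      · have hp : ((-1)*v3*w2 + v2*w3 + (-1)*v1*w0 + v0*w1) * ((-1)*v3*w3 + v2*w2 + v1*w1 + (-1)*v0*w0) = 0 := by linear_combination (v3*w2 + (-1)*v2*w3 + v1*w0 + (-1)*v0*w1) * h3
        exact (mul_eq_zero.mp hp).resolve_left hA1
      · have hp : ((-1)*v3*w2 + v2*w3 + (-1)*v1*w0 + v0*w1) * (v3*w2 + (-1)*v2*w3 + (-1)*v1*w0 + v0*w1) = 0 := by linear_combination (w3^2 + (-1)*w2^2) * h1 + (v1^2 + (-1)*v0^2) * h2 + ((-1)*v3*w3 + v2*w2 + (-1)*v1*w1 + v0*w0) * h3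
        exact (mul_eq_zero.mp hp).resolve_left hA1
      · have hp : ((-1)*v3*w2 + v2*w3 + (-1)*v1*w0 + v0*w1) * ((-1)*v3*w1 + (-1)*v2*w0 + v1*w3 + v0*w2) = 0 := by linear_combination (w1*w2 + w0*w3) * h1 + (v1*v2 + v0*v3) * h2 + ((-1)*v3*w0 + (-1)*v2*w1 + (-1)*v1*w2 + (-1)*v0*w3) * h3
        exact (mul_eq_zero.mp hp).resolve_left hA1
      · have hp : ((-1)*v3*w2 + v2*w3 + (-1)*v1*w0 + v0*w1) * ((-1)*v3*w0 + (-1)*v2*w1 + v1*w2 + v0*w3) = 0 := by linear_combination (w1*w3 + w0*w2) * h1 + (v1*v3 + v0*v2) * h2 + ((-1)*v3*w1 + (-1)*v2*w0 + (-1)*v1*w3 + (-1)*v0*w2) * h3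
        exact (mul_eq_zero.mp hp).resolve_left hA1
    case pos =>
      by_cases hA2 : (v3*w1 + (-1)*v2*w0 + (-1)*v1*w3 + v0*w2 : ℝ) = 0
      case neg =>
        refine Or.inr ⟨?_, ?_, ?_, ?_⟩
        · have hp : (v3*w1 + (-1)*v2*w0 + (-1)*v1*w3 + v0*w2) * ((-1)*v3*w3 + v2*w2 + v1*w1 + (-1)*v0*w0) = 0 := by linear_combination ((-1)*v3*w1 + v2*w0 + v1*w3 + (-1)*v0*w2) * h3
          exact (mul_eq_zero.mp hp).resolve_left hA2
        · have hp : (v3*w1 + (-1)*v2*w0 + (-1)*v1*w3 + v0*w2) * (v3*w2 + (-1)*v2*w3 + (-1)*v1*w0 + v0*w1) = 0 := by linear_combination (w1*w2 + (-1)*w0*w3) * h1 + (v1*v2 + (-1)*v0*v3) * h2 + (v3*w0 + (-1)*v2*w1 + (-1)*v1*w2 + v0*w3) * h3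
          exact (mul_eq_zero.mp hp).resolve_left hA2
        · have hp : (v3*w1 + (-1)*v2*w0 + (-1)*v1*w3 + v0*w2) * ((-1)*v3*w1 + (-1)*v2*w0 + v1*w3 + v0*w2) = 0 := by linear_combination (w3^2 + (-1)*w1^2) * h1 + (v2^2 + (-1)*v0^2) * h2 + ((-1)*v3*w3 + (-1)*v2*w2 + v1*w1 + v0*w0) * h3
          exact (mul_eq_zero.mp hp).resolve_left hA2
        · have hp : (v3*w1 + (-1)*v2*w0 + (-1)*v1*w3 + v0*w2) * ((-1)*v3*w0 + (-1)*v2*w1 + v1*w2 + v0*w3) = 0 := by linear_combination (w2*w3 + (-1)*w0*w1) * h1 + (v2*v3 + (-1)*v0*v1) * h2 + ((-1)*v3*w2 + (-1)*v2*w3 + v1*w0 + v0*w1) * h3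
          exact (mul_eq_zero.mp hp).resolve_left hA2
      case pos =>
        by_cases hA3 : ((-1)*v3*w0 + v2*w1 + (-1)*v1*w2 + v0*w3 : ℝ) = 0
        case neg =>
          refine Or.inr ⟨?_, ?_, ?_, ?_⟩
          · have hp : ((-1)*v3*w0 + v2*w1 + (-1)*v1*w2 + v0*w3) * ((-1)*v3*w3 + v2*w2 + v1*w1 + (-1)*v0*w0) = 0 := by linear_combination (v3*w0 + (-1)*v2*w1 + v1*w2 + (-1)*v0*w3) * h3
            exact (mul_eq_zero.mp hp).resolve_left hA3
          · have hp : ((-1)*v3*w0 + v2*w1 + (-1)*v1*w2 + v0*w3) * (v3*w2 + (-1)*v2*w3 + (-1)*v1*w0 + v0*w1) = 0 := by linear_combination (w1*w3 + (-1)*w0*w2) * h1 + (v1*v3 + (-1)*v0*v2) * h2 + ((-1)*v3*w1 + v2*w0 + (-1)*v1*w3 + v0*w2) * h3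
            exact (mul_eq_zero.mp hp).resolve_left hA3
          · have hp : ((-1)*v3*w0 + v2*w1 + (-1)*v1*w2 + v0*w3) * ((-1)*v3*w1 + (-1)*v2*w0 + v1*w3 + v0*w2) = 0 := by linear_combination (w2*w3 + w0*w1) * h1 + (v2*v3 + v0*v1) * h2 + ((-1)*v3*w2 + (-1)*v2*w3 + (-1)*v1*w0 + (-1)*v0*w1) * h3
            exact (mul_eq_zero.mp hp).resolve_left hA3
          · have hp : ((-1)*v3*w0 + v2*w1 + (-1)*v1*w2 + v0*w3) * ((-1)*v3*w0 + (-1)*v2*w1 + v1*w2 + v0*w3) = 0 := by linear_combination (w3^2 + w0^2) * h1 + (v2^2 + v1^2) * h2 + ((-1)*v3*w3 + (-1)*v2*w2 + (-1)*v1*w1 + (-1)*v0*w0) * h3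
            exact (mul_eq_zero.mp hp).resolve_left hA3
        case pos =>
          exact Or.inl ⟨hA0, hA1, hA2, hA3⟩


def rr (r : ℝ) : SplitQuat := ⟨r, 0, 0, 0⟩
def nq (x : SplitQuat) : ℝ := x.re^2 - x.imI^2 - x.imJ^2 + x.imK^2
def ee (x y : SplitQuat) : ℝ := x.re*y.re + x.imI*y.imI + x.imJ*y.imJ + x.imK*y.imK
def cj (x : SplitQuat) : SplitQuat := ⟨x.re, -x.imI, -x.imJ, -x.imK⟩
def Tt (x : SplitQuat) : SplitQuat := ⟨x.re, x.imI, x.imJ, -x.imK⟩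
def Jm (x : SplitQuat) : SplitQuat := ⟨x.re, -x.imI, -x.imJ, x.imK⟩

@[simp] lemma rr_re (r : ℝ) : (rr r).re = r := rfl
@[simp] lemma rr_imI (r : ℝ) : (rr r).imI = 0 := rfl
@[simp] lemma rr_imJ (r : ℝ) : (rr r).imJ = 0 := rfl
@[simp] lemma rr_imK (r : ℝ) : (rr r).imK = 0 := rfl
@[simp] lemma cj_re (x : SplitQuat) : (cj x).re = x.re := rfl
@[simp] lemma cj_imI (x : SplitQuat) : (cj x).imI = -x.imI := rfl
@[simp] lemma cj_imJ (x : SplitQuat) : (cj x).imJ = -x.imJ := rfl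
@[simp] lemma cj_imK (x : SplitQuat) : (cj x).imK = -x.imK := rfl
@[simp] lemma Tt_re (x : SplitQuat) : (Tt x).re = x.re := rfl
@[simp] lemma Tt_imI (x : SplitQuat) : (Tt x).imI = x.imI := rfl
@[simp] lemma Tt_imJ (x : SplitQuat) : (Tt x).imJ = x.imJ := rfl
@[simp] lemma Tt_imK (x : SplitQuat) : (Tt x).imK = -x.imK := rfl
@[simp] lemma Jm_re (x : SplitQuat) : (Jm x).re = x.re := rfl
@[simp] lemma Jm_imI (x : SplitQuat) : (Jm x).imI = -x.imI := rfl
@[simp] lemma Jm_imJ (x : SplitQuat) : (Jm x).imJ = -x.imJ := rfl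
@[simp] lemma Jm_imK (x : SplitQuat) : (Jm x).imK = x.imK := rfl

lemma mul_cj (x : SplitQuat) : x * cj x = rr (nq x) := by
  ext <;> simp [nq, QuaternionAlgebra.re_mul] <;> ring

lemma charpoly (x : SplitQuat) : x*x = rr (2*x.re) * x - rr (nq x) := by
  ext <;> simp [nq, QuaternionAlgebra.re_mul] <;> ring

lemma nq_mul (x y : SplitQuat) : nq (x*y) = nq x * nq y := by
  simp [nq, QuaternionAlgebra.re_mul]; ring

@[simp] lemma nq_cj (x : SplitQuat) : nq (cj x) = nq x := by simp [nq]

lemma re_mul_comm (x y : SplitQuat) : (x*y).re = (y*x).re := by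
  simp [QuaternionAlgebra.re_mul]; ring

lemma Tident (g : SplitQuat) : g * Tt g + Tt (cj g) * cj g = rr (2 * ee g g) := by
  ext <;> simp [ee, QuaternionAlgebra.re_mul] <;> ring

lemma cj_mul (x y : SplitQuat) : cj (x*y) = cj y * cj x := by
  ext <;> simp [QuaternionAlgebra.re_mul] <;> ring

@[simp] lemma cj_cj (x : SplitQuat) : cj (cj x) = x := by ext <;> simp

lemma rr_mul (a b : ℝ) : rr a * rr b = rr (a*b) := by
  ext <;> simp [QuaternionAlgebra.re_mul]

@[simp] lemma rr_one : rr 1 = 1 := rfl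
@[simp] lemma rr_zero : rr 0 = 0 := rfl

lemma rr_comm (r : ℝ) (x : SplitQuat) : rr r * x = x * rr r := by
  ext <;> simp [QuaternionAlgebra.re_mul] <;> ring

lemma key (p q h : SplitQuat) (τ δ : ℝ) (h1 : (p + rr τ) * h = rr δ - q)
    (h2 : 2*h.re = τ) (h3 : nq h = δ) : h*h + p*h + q = 0 := by
  have hp : p * h = (rr δ - q) - rr τ * h := by rw [← h1]; noncomm_ring
  rw [charpoly, h2, h3, hp]; noncomm_ring

lemma ee_self_nonneg (x : SplitQuat) : 0 ≤ ee x x := by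
  simp only [ee]; nlinarith [sq_nonneg x.re, sq_nonneg x.imI, sq_nonneg x.imJ, sq_nonneg x.imK]

lemma ee_self_eq_zero {x : SplitQuat} (h : ee x x = 0) : x = 0 := by
  simp only [ee] at h
  ext <;>
    simp only [QuaternionAlgebra.re_zero, QuaternionAlgebra.imI_zero,
      QuaternionAlgebra.imJ_zero, QuaternionAlgebra.imK_zero] <;>
    nlinarith [sq_nonneg x.re, sq_nonneg x.imI, sq_nonneg x.imJ, sq_nonneg x.imK]

lemma gram_solve (k ezz egz A Bt : ℝ) (hD : 0 < k*ezz - egz^2) :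
    ∃ α β : ℝ, α*k + β*egz = A/2 ∧ α*egz + β*ezz = Bt/2 := by
  refine ⟨(ezz*A - egz*Bt)/(2*(k*ezz-egz^2)), (k*Bt - egz*A)/(2*(k*ezz-egz^2)), ?_, ?_⟩ <;>
  · rw [div_mul_eq_mul_div, div_mul_eq_mul_div, ← add_div,
      div_eq_div_iff (by positivity) two_ne_zero]
    ring

lemma cjJm_re (g t : SplitQuat) : (cj g * Jm t).re = ee g t := by
  simp [ee, QuaternionAlgebra.re_mul]

lemma cjJm_re' (t z : SplitQuat) : (cj (Jm t) * z).re = ee t z := by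
  simp [ee, QuaternionAlgebra.re_mul]

lemma nq_add (x y : SplitQuat) : nq (x + y) = nq x + nq y + 2*(x * cj y).re := by
  simp [nq, QuaternionAlgebra.re_mul]; ring

lemma ee_comb (g x y : SplitQuat) (α β : ℝ) :
    ee g (rr α * x + rr β * y) = α * ee g x + β * ee g y := by
  simp [ee, QuaternionAlgebra.re_mul, QuaternionAlgebra.imI_mul, QuaternionAlgebra.imJ_mul,
    QuaternionAlgebra.imK_mul]
  ring

lemma ee_comb' (g x y : SplitQuat) (α β : ℝ) :
    ee (rr α * x + rr β * y) g = α * ee x g + β * ee y g := by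
  simp [ee, QuaternionAlgebra.re_mul, QuaternionAlgebra.imI_mul, QuaternionAlgebra.imJ_mul,
    QuaternionAlgebra.imK_mul]
  ring

lemma caseB_core (p q g z : SplitQuat) (τ δ : ℝ) (hng : nq g = 0) (hsolv : cj g * z = 0)
    (hpg : p + rr τ = g) (hqz : rr δ - q = z)
    (hind : ∀ α β : ℝ, rr α * g + rr β * z = 0 → α = 0 ∧ β = 0) :
    ∃ h : SplitQuat, h*h + p*h + q = 0 := by
  set k := ee g g with hkdef
  set ezz := ee z z with hezzdef
  set egz := ee g z with hegzdef
  -- g ≠ 0 and z ≠ 0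
  have hg0 : g ≠ 0 := by
    intro h
    have := (hind 1 0 (by rw [h]; simp)).1
    norm_num at this
  have hz0 : z ≠ 0 := by
    intro h
    have := (hind 0 1 (by rw [h]; simp)).2
    norm_num at this
  have hk : 0 < k := by
    rcases (ee_self_nonneg g).lt_or_eq with h | h
    · exact h
    · exact absurd (ee_self_eq_zero h.symm) hg0
  -- particular solution
  set h₀ : SplitQuat := rr (2*k)⁻¹ * (Tt g * z) with hh0def
  have hgh₀ : g * h₀ = z := by
    have e1 : g * (Tt g * z) = rr (2*k) * z := by
      rw [← mul_assoc]
      have : g * Tt g = rr (2 * ee g g) - Tt (cj g) * cj g := by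
        rw [← Tident g]; abel
      rw [this, sub_mul, mul_assoc, hsolv, mul_zero, sub_zero, ← hkdef]
    calc g * h₀ = rr (2*k)⁻¹ * (g * (Tt g * z)) := by
          rw [hh0def, ← mul_assoc, ← rr_comm, mul_assoc]
      _ = z := by
          rw [e1, ← mul_assoc, rr_mul, inv_mul_cancel₀ (by positivity), rr_one, one_mul]
  -- Gram determinant positive
  have hD : 0 < k * ezz - egz^2 := by
    have hD0 : 0 ≤ k * ezz - egz^2 := by
      rw [hkdef, hezzdef, hegzdef]
      simp only [ee]
      nlinarith [sq_nonneg (g.re*z.imI - g.imI*z.re), sq_nonneg (g.re*z.imJ - g.imJ*z.re),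
        sq_nonneg (g.re*z.imK - g.imK*z.re), sq_nonneg (g.imI*z.imJ - g.imJ*z.imI),
        sq_nonneg (g.imI*z.imK - g.imK*z.imI), sq_nonneg (g.imJ*z.imK - g.imK*z.imJ)]
    rcases hD0.lt_or_eq with h | h
    · exact h
    · exfalso
      have hzg : ee z g = egz := by rw [hegzdef]; simp only [ee]; ring
      have ht0 : rr ezz * g + rr (-egz) * z = 0 := by
        apply ee_self_eq_zero
        have expand : ee (rr ezz * g + rr (-egz) * z) (rr ezz * g + rr (-egz) * z)
            = ezz * (ezz * k + (-egz) * egz) + (-egz) * (ezz * egz + (-egz) * ezz) := by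
          rw [ee_comb', ee_comb, ee_comb, ← hkdef, ← hegzdef, ← hezzdef, hzg]
        rw [expand]; linear_combination (ezz) * h.symm
      have h2 := hind ezz (-egz) ht0
      have : z = 0 := ee_self_eq_zero (by rw [← hezzdef, h2.1])
      exact hz0 this
  -- targets
  set A := τ - 2*h₀.re with hAdef
  set Bt := δ - nq h₀ with hBtdef
  obtain ⟨α, β, hα, hβ⟩ := gram_solve k ezz egz A Bt hD
  set t : SplitQuat := rr α * g + rr β * z with htdef
  set h : SplitQuat := h₀ + cj g * Jm t with hhdef
  have heegt : ee g t = A/2 := by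
    rw [htdef, ee_comb, ← hkdef, ← hegzdef]; exact hα
  have heetz : ee t z = Bt/2 := by
    rw [htdef, ee_comb', ← hezzdef, ← hegzdef]
    exact hβ
  have hnq2 : nq (cj g * Jm t) = 0 := by rw [nq_mul, nq_cj, hng, zero_mul]
  refine ⟨h, key p q h τ δ ?_ ?_ ?_⟩
  · rw [hpg, hqz, hhdef, mul_add, hgh₀, ← mul_assoc, mul_cj, hng, rr_zero, zero_mul, add_zero]
  · rw [hhdef]
    simp only [QuaternionAlgebra.re_add]
    rw [cjJm_re, heegt, hAdef]; ring
  · have cross : (h₀ * cj (cj g * Jm t)).re = Bt/2 := by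
      rw [cj_mul, cj_cj, re_mul_comm, mul_assoc, hgh₀, cjJm_re', heetz]
    rw [hhdef, nq_add, hnq2, cross, hBtdef]; ring


def mi (x y : SplitQuat) : ℝ := x.re*y.re - x.imI*y.imI - x.imJ*y.imJ + x.imK*y.imK

lemma cjmul_re (x y : SplitQuat) : (cj x * y).re = mi x y := by
  simp [mi, QuaternionAlgebra.re_mul]; ring

lemma rr_mul_re (r : ℝ) (x : SplitQuat) : (rr r * x).re = r * x.re := by
  simp [QuaternionAlgebra.re_mul]

lemma nq_rr (r : ℝ) : nq (rr r) = r^2 := by simp [nq]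

@[simp] lemma nq_neg (x : SplitQuat) : nq (-x) = nq x := by simp [nq]

lemma rr_neg (r : ℝ) : rr (-r) = - rr r := by ext <;> simp

lemma cj_eq (x : SplitQuat) : cj x = rr (2*x.re) - x := by ext <;> simp <;> ring

lemma cj_neg (x : SplitQuat) : cj (-x) = - cj x := by ext <;> simp

lemma caseA (p q v w : SplitQuat) (b c : ℝ) (hv : v = p - rr b) (hw : w = q - rr c)
    (hd : nq v ≠ 0) (hE1 : 2 * mi v w = nq v * b) (hE2 : nq w = nq v * c) :
    ∃ h : SplitQuat, h*h + p*h + q = 0 := by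
  refine ⟨rr (-(nq v)⁻¹) * (cj v * w), key p q _ (-b) c ?_ ?_ ?_⟩
  · have hpg : p + rr (-b) = v := by rw [hv, rr_neg]; abel
    rw [hpg]
    have step : v * (rr (-(nq v)⁻¹) * (cj v * w)) = rr (-(nq v)⁻¹) * ((v * cj v) * w) := by
      rw [← mul_assoc, ← rr_comm, mul_assoc, mul_assoc]
    rw [step, mul_cj, ← mul_assoc, rr_mul]
    have : -(nq v)⁻¹ * nq v = -1 := by field_simp
    rw [this, rr_neg, rr_one, neg_one_mul, hw, neg_sub]
  · rw [rr_mul_re, cjmul_re]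
    field_simp
    linarith [hE1]
  · rw [nq_mul, nq_rr, nq_mul, nq_cj, hE2]
    field_simp

lemma exists_root (p q : SplitQuat)
    (H : ∀ a b c : ℝ, rr a + rr b * p + rr c * q = 0 → a = 0 ∧ b = 0 ∧ c = 0) :
    ∃ h : SplitQuat, h*h + p*h + q = 0 := by
  obtain ⟨b, c, b', c', e1, e2, e3, e4⟩ :=
    quartic_factor (2*p.re) (nq p + 2*q.re) (2 * mi p q) (nq q)
  set v : SplitQuat := p - rr b with hvdef
  set w : SplitQuat := q - rr c with hwdef
  simp only [nq, mi] at e2 e3 e4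
  have hE1 : 2 * mi v w = nq v * b := by
    simp only [hvdef, hwdef, mi, nq, QuaternionAlgebra.re_mul, QuaternionAlgebra.imI_mul,
      QuaternionAlgebra.imJ_mul, QuaternionAlgebra.imK_mul, QuaternionAlgebra.re_sub,
      QuaternionAlgebra.imI_sub, QuaternionAlgebra.imJ_sub, QuaternionAlgebra.imK_sub,
      rr_re, rr_imI, rr_imJ, rr_imK, sub_zero]
    linear_combination (c - b^2) * e1 + b * e2 - e3
  have hE2 : nq w = nq v * c := by
    simp only [hvdef, hwdef, mi, nq, QuaternionAlgebra.re_mul, QuaternionAlgebra.imI_mul,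
      QuaternionAlgebra.imJ_mul, QuaternionAlgebra.imK_mul, QuaternionAlgebra.re_sub,
      QuaternionAlgebra.imI_sub, QuaternionAlgebra.imJ_sub, QuaternionAlgebra.imK_sub,
      rr_re, rr_imI, rr_imJ, rr_imK, sub_zero]
    linear_combination (-(b*c)) * e1 + c * e2 - e4
  by_cases hd : nq v = 0
  case neg => exact caseA p q v w b c hvdef hwdef hd hE1 hE2
  case pos =>
  have hmvw : mi v w = 0 := by rw [hd, zero_mul] at hE1; linarith
  have hnw : nq w = 0 := by rw [hE2, hd, zero_mul]
  have Hvw : ∀ α β γ : ℝ, rr α + rr β * v + rr γ * w = 0 → β = 0 ∧ γ = 0 := by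
    intro α β γ hrel
    have heq : rr (α - β*b - γ*c) + rr β * p + rr γ * q = 0 := by
      rw [← hrel, hvdef, hwdef]
      ext <;> simp <;> ring
    exact ⟨(H _ _ _ heq).2.1, (H _ _ _ heq).2.2⟩
  have hd' : v.re^2 - v.imI^2 - v.imJ^2 + v.imK^2 = 0 := by exact hd
  have hnw' : w.re^2 - w.imI^2 - w.imJ^2 + w.imK^2 = 0 := by exact hnw
  have hmvw' : v.re*w.re - v.imI*w.imI - v.imJ*w.imJ + v.imK*w.imK = 0 := by exact hmvw
  rcases dich v.re v.imI v.imJ v.imK w.re w.imI w.imJ w.imK hd' hnw' hmvw' with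
    ⟨hA0, hA1, hA2, hA3⟩ | ⟨hB0, hB1, hB2, hB3⟩
  · -- B1 : cj v * w = 0
    have hcvw : cj v * w = 0 := by
      ext <;> simp only [QuaternionAlgebra.re_mul, QuaternionAlgebra.imI_mul,
        QuaternionAlgebra.imJ_mul, QuaternionAlgebra.imK_mul, cj_re, cj_imI, cj_imJ, cj_imK,
        QuaternionAlgebra.re_zero, QuaternionAlgebra.imI_zero, QuaternionAlgebra.imJ_zero,
        QuaternionAlgebra.imK_zero]
      · linear_combination hA0
      · linear_combination hA1
      · linear_combination hA2
      · linear_combination hA3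
    apply caseB_core p q v (-w) (-b) c hd (by rw [mul_neg, hcvw, neg_zero])
      (by rw [hvdef, rr_neg]; abel) (by rw [hwdef, neg_sub])
    intro α β hrel
    have heq : rr 0 + rr α * v + rr (-β) * w = 0 := by
      rw [← hrel]; ext <;> simp <;> ring
    obtain ⟨hα, hβ⟩ := Hvw 0 α (-β) heq
    exact ⟨hα, neg_eq_zero.mp hβ⟩
  · -- B2 : v * w = rr (2*w.re) * v
    have hvw : v * w = rr (2*w.re) * v := by
      ext <;> simp only [QuaternionAlgebra.re_mul, QuaternionAlgebra.imI_mul,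
        QuaternionAlgebra.imJ_mul, QuaternionAlgebra.imK_mul,
        rr_re, rr_imI, rr_imJ, rr_imK]
      · linear_combination hB0
      · linear_combination hB1
      · linear_combination hB2
      · linear_combination hB3
    apply caseB_core p q (-(cj v)) (cj w) (-b - 2*v.re) (c + 2*w.re)
      (by rw [nq_neg, nq_cj]; exact hd)
      (by rw [cj_neg, cj_cj, neg_mul, cj_eq w, mul_sub, ← rr_comm, hvw, sub_self, neg_zero])
      (by rw [hvdef]; ext <;> simp <;> ring)
      (by rw [hwdef]; ext <;> simp <;> ring)
    intro α β hrel
    have heq : rr (2*β*w.re - 2*α*v.re) + rr α * v + rr (-β) * w = 0 := by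
      rw [← hrel]; ext <;> simp <;> ring
    obtain ⟨hα, hβ⟩ := Hvw _ α (-β) heq
    exact ⟨hα, neg_eq_zero.mp hβ⟩

lemma rr_smul (r : ℝ) (x : SplitQuat) : rr r * x = r • x := by
  ext <;> simp [QuaternionAlgebra.re_mul]

end
end SQ

/-- A quadratic split quaternion polynomial with invertible leading coefficient and
linearly independent coefficients admits a factorization into linear factors. -/
theorem quadratic_split_quaternion_factorization (c₀ c₁ c₂ : SplitQuat)
    (hc₂ : IsUnit c₂) (hli : LinearIndependent ℝ ![c₀, c₁, c₂]) :
    ∃ h₁ h₂ : SplitQuat,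
      (Polynomial.C c₂ * X ^ 2 + Polynomial.C c₁ * X + Polynomial.C c₀ : Polynomial SplitQuat)
        = Polynomial.C c₂ * (X - Polynomial.C h₁) * (X - Polynomial.C h₂) := by
  obtain ⟨u, hu⟩ := hc₂
  set p : SplitQuat := ↑u⁻¹ * c₁ with hpdef
  set q : SplitQuat := ↑u⁻¹ * c₀ with hqdef
  have hcp : c₂ * p = c₁ := by rw [hpdef, ← hu, Units.mul_inv_cancel_left]
  have hcq : c₂ * q = c₀ := by rw [hqdef, ← hu, Units.mul_inv_cancel_left]
  have H : ∀ a b c : ℝ, SQ.rr a + SQ.rr b * p + SQ.rr c * q = 0 → a = 0 ∧ b = 0 ∧ c = 0 := by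
    intro a b c hrel
    have hthis : c₂ * SQ.rr a + c₂ * (SQ.rr b * p) + c₂ * (SQ.rr c * q) = 0 := by
      have := congrArg (fun x => c₂ * x) hrel
      simp only [mul_zero, mul_add] at this
      exact this
    have e1 : c₂ * (SQ.rr b * p) = SQ.rr b * (c₂ * p) := by
      rw [← mul_assoc, ← SQ.rr_comm b c₂, mul_assoc]
    have e2 : c₂ * (SQ.rr c * q) = SQ.rr c * (c₂ * q) := by
      rw [← mul_assoc, ← SQ.rr_comm c c₂, mul_assoc]
    have e3 : c₂ * SQ.rr a = SQ.rr a * c₂ := (SQ.rr_comm a c₂).symm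
    have h2 : SQ.rr a * c₂ + SQ.rr b * c₁ + SQ.rr c * c₀ = 0 := by
      rw [← hcp, ← hcq, ← e1, ← e2, ← e3]; exact hthis
    have h3 : (∑ i, (![c, b, a] : Fin 3 → ℝ) i • ![c₀, c₁, c₂] i) = 0 := by
      rw [Fin.sum_univ_three]
      simp only [Matrix.cons_val_zero, Matrix.cons_val_one, Matrix.head_cons,
        Matrix.cons_val_two, Matrix.tail_cons]
      rw [← SQ.rr_smul, ← SQ.rr_smul, ← SQ.rr_smul, ← h2]
      abel
    have h4 := Fintype.linearIndependent_iff.mp hli ![c, b, a] h3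
    exact ⟨h4 2, h4 1, h4 0⟩
  obtain ⟨h, hroot⟩ := SQ.exists_root p q H
  refine ⟨-p - h, h, ?_⟩
  have k1 : -(c₂*h) - c₂*(-p - h) = c₁ := by
    rw [mul_sub, mul_neg, hcp]; abel
  have k2 : c₂ * (-p - h) * h = c₀ := by
    have hq' : (-p - h) * h = q := by
      calc (-p - h) * h = -(h*h + p*h + q) + q := by noncomm_ring
        _ = q := by rw [hroot, neg_zero, zero_add]
    rw [mul_assoc, hq', hcq]
  have xc : (X : Polynomial SplitQuat) * Polynomial.C h = Polynomial.C h * X :=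
    Polynomial.X_mul
  rw [← k1, ← k2]
  have step1 : Polynomial.C c₂ * (X - Polynomial.C (-p - h)) * (X - Polynomial.C h)
      = Polynomial.C c₂ * X * X - Polynomial.C c₂ * (X * Polynomial.C h)
        - Polynomial.C c₂ * Polynomial.C (-p - h) * X
        + Polynomial.C c₂ * Polynomial.C (-p - h) * Polynomial.C h := by noncomm_ring
  have step2 : Polynomial.C c₂ * ((X : Polynomial SplitQuat) * Polynomial.C h)
      = Polynomial.C (c₂ * h) * X := by rw [xc, ← mul_assoc, ← map_mul]
  have step3 : Polynomial.C c₂ * Polynomial.C (-p - h) * (X : Polynomial SplitQuat)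
      = Polynomial.C (c₂ * (-p - h)) * X := by rw [← map_mul]
  have step4 : Polynomial.C c₂ * Polynomial.C (-p - h) * Polynomial.C h
      = Polynomial.C (c₂ * (-p - h) * h) := by rw [← map_mul, ← map_mul]
  rw [step1, step2, step3, step4]
  simp only [map_sub, map_neg]
  noncomm_ring
end

section
/- There is no split quaternion h ∈ 𝕊 with h² + 2𝐢 = 0; consequently, there are no h₁, h₂ ∈ 𝕊 such that t² + 2𝐢 = (t − h₁)(t − h₂) in 𝕊[t], i.e. the monic quadratic split quaternion polynomial t² + 2𝐢 admits no factorization into linear factors. -/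
open Polynomial Quaternion

/-- The split quaternion unit `𝐢`. -/
def si : SplitQuat := ⟨0, 1, 0, 0⟩

lemma no_right_zero : ¬ ∃ h : SplitQuat, h ^ 2 + 2 * si = 0 := by
  rintro ⟨⟨a, b, c, d⟩, hh⟩
  rw [QuaternionAlgebra.ext_iff] at hh
  have r2 : ((2 : SplitQuat)).re = 2 := rfl
  have i2 : ((2 : SplitQuat)).imI = 0 := rfl
  have j2 : ((2 : SplitQuat)).imJ = 0 := rfl
  have k2 : ((2 : SplitQuat)).imK = 0 := rfl
  simp [pow_two, si, QuaternionAlgebra.mk_mul_mk, r2, i2, j2, k2] at hh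
  obtain ⟨h1, h2, h3, h4⟩ := hh
  nlinarith [sq_nonneg a, sq_nonneg b, sq_nonneg (a*b), sq_nonneg (a+b), sq_nonneg (a-b),
    sq_nonneg c, sq_nonneg d, sq_nonneg (a*c), sq_nonneg (a*d)]


/-- The split quaternion polynomial `t² + 2𝐢` has no right zero and hence admits no
factorization into linear factors. -/
theorem no_factorization_split_quadratic :
    (¬ ∃ h : SplitQuat, h ^ 2 + 2 * si = 0) ∧
    ¬ ∃ h₁ h₂ : SplitQuat,
      (X ^ 2 + Polynomial.C (2 * si) : Polynomial SplitQuat)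
        = (X - Polynomial.C h₁) * (X - Polynomial.C h₂) := by
  refine ⟨no_right_zero, ?_⟩
  rintro ⟨h₁, h₂, heq⟩
  have expand : (X - Polynomial.C h₁) * (X - Polynomial.C h₂)
      = X^2 - Polynomial.C (h₁ + h₂) * X + Polynomial.C (h₁ * h₂) := by
    simp only [sub_mul, mul_sub, C_mul, C_add, X_mul_C]
    noncomm_ring
  rw [expand] at heq
  have e1 : (0 : SplitQuat) = -(h₁ + h₂) := by
    have := congrArg (fun p => Polynomial.coeff p 1) heq
    simpa [coeff_one, coeff_X, pow_two, coeff_mul_X] using this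
  have e0 : 2 * si = h₁ * h₂ := by
    have := congrArg (fun p => Polynomial.coeff p 0) heq
    simpa [coeff_one, coeff_X, pow_two] using this
  apply no_right_zero
  refine ⟨h₂, ?_⟩
  have h12 : h₁ = -h₂ := by
    have h0 : h₁ + h₂ = 0 := by rw [← neg_eq_zero, ← e1]
    exact eq_neg_of_add_eq_zero_left h0
  rw [h12, neg_mul] at e0
  have hsq : h₂ ^ 2 = -(2 * si) := by rw [pow_two, ← neg_eq_iff_eq_neg, ← e0]
  rw [hsq, neg_add_cancel]
end

section
/- There are no dual quaternions h₁, h₂ ∈ 𝔻ℍ such that t² + ε = (t − h₁)(t − h₂) in 𝔻ℍ[t]; equivalently, there is no h ∈ 𝔻ℍ with h² + ε = 0, so the monic polynomial t² + ε ∈ 𝔻ℍ[t] admits no factorization into linear factors. -/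
open Polynomial DualNumber

/-- No dual quaternion squares to `-ε`. -/
lemma no_root_aux : ∀ h : DH, h ^ 2 + ε ≠ 0 := by
  intro h hh
  have h1 : (h ^ 2 + ε : DH).fst = 0 := by rw [hh]; rfl
  have h2 : (h ^ 2 + ε : DH).snd = 0 := by rw [hh]; rfl
  rw [sq] at h1 h2
  simp [TrivSqZeroExt.fst_add, TrivSqZeroExt.fst_mul] at h1
  have hf := h1
  rw [TrivSqZeroExt.snd_add, TrivSqZeroExt.snd_mul, hf] at h2
  simp at h2

/-- The dual quaternion polynomial `t² + ε` admits no factorization into linear factors: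
there is no `h` with `h² + ε = 0`. -/
theorem no_factorization_t_sq_add_eps :
    (¬ ∃ h₁ h₂ : DH,
      (X ^ 2 + Polynomial.C (ε : DH) : Polynomial DH)
        = (X - Polynomial.C h₁) * (X - Polynomial.C h₂)) ∧
    ¬ ∃ h : DH, h ^ 2 + ε = 0 := by
  constructor
  · rintro ⟨h₁, h₂, heq⟩
    have expand : (X - Polynomial.C h₁) * (X - Polynomial.C h₂)
        = X ^ 2 - Polynomial.C (h₁ + h₂) * X + Polynomial.C (h₁ * h₂) := by
      rw [sub_mul, mul_sub, mul_sub, C_add, add_mul, ← sq, X_mul_C, C_mul]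
      abel
    rw [expand] at heq
    have c1 := congrArg (fun p => Polynomial.coeff p 1) heq
    have c0 := congrArg (fun p => Polynomial.coeff p 0) heq
    simp only [coeff_add, coeff_sub, coeff_C_mul, coeff_X, coeff_X_pow, coeff_C] at c0 c1
    norm_num at c0 c1
    have h2e : h₂ = -h₁ := by
      have := c1.symm
      linear_combination (norm := abel) -this
    rw [h2e, mul_neg, ← sq] at c0
    exact no_root_aux h₁ (by rw [c0, add_neg_cancel])
  · rintro ⟨h, hh⟩
    exact no_root_aux h hh
end

section
/- Let C = t² + ε𝐢 ∈ 𝔻ℍ[t]. Then for every monic quaternion polynomial D ∈ ℍ[t] (viewed in 𝔻ℍ[t] with zero dual part), the product C·D admits no factorization into linear factors: there is no n and no h₁, …, hₙ ∈ 𝔻ℍ with C·D = (t − h₁)(t − h₂) ⋯ (t − hₙ). -/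
set_option maxHeartbeats 1000000
set_option synthInstance.maxHeartbeats 200000

open Polynomial DualNumber

/-- Quaternion unit `𝐢`. -/
def qi : Quaternion ℝ := ⟨0, 1, 0, 0⟩

/-- The dual quaternion with primal part `a` and dual part `b`, i.e. `a + εb`. -/
def dq (a b : Quaternion ℝ) : DH := (a, b)

namespace NoFactAux

local notation "ℍ" => Quaternion ℝ

noncomputable section

/-- Base ring hom from `𝔻ℍ` to the dual numbers over `ℍ[X]`. -/
def g : DH →+* DualNumber (Polynomial ℍ) where
  toFun z := (Polynomial.C z.fst, Polynomial.C z.snd)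
  map_one' := by
    refine TrivSqZeroExt.ext ?_ ?_ <;>
      simp only [TrivSqZeroExt.fst_one, TrivSqZeroExt.snd_one, TrivSqZeroExt.fst_mk,
        TrivSqZeroExt.snd_mk, Polynomial.C_1, Polynomial.C_0]
  map_mul' z w := by
    refine TrivSqZeroExt.ext ?_ ?_ <;>
      simp only [TrivSqZeroExt.fst_mul, TrivSqZeroExt.snd_mul, TrivSqZeroExt.fst_mk,
        TrivSqZeroExt.snd_mk, smul_eq_mul, op_smul_eq_mul, Polynomial.C_mul, Polynomial.C_add] <;> rfl
  map_zero' := by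
    refine TrivSqZeroExt.ext ?_ ?_ <;>
      simp only [TrivSqZeroExt.fst_zero, TrivSqZeroExt.snd_zero, TrivSqZeroExt.fst_mk,
        TrivSqZeroExt.snd_mk, Polynomial.C_0]
  map_add' z w := by
    refine TrivSqZeroExt.ext ?_ ?_ <;>
      simp only [TrivSqZeroExt.fst_add, TrivSqZeroExt.snd_add, TrivSqZeroExt.fst_mk,
        TrivSqZeroExt.snd_mk, Polynomial.C_add] <;> rfl

lemma g_apply (z : DH) :
    g z = (Polynomial.C z.fst, Polynomial.C z.snd) := rfl

lemma hcomm : ∀ z : DH, Commute (g z) (TrivSqZeroExt.inl (Polynomial.X : Polynomial ℍ)) := by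
  intro z
  refine TrivSqZeroExt.ext ?_ ?_ <;>
    simp only [g_apply, TrivSqZeroExt.fst_mul, TrivSqZeroExt.snd_mul, TrivSqZeroExt.fst_mk,
      TrivSqZeroExt.snd_mk, TrivSqZeroExt.fst_inl, TrivSqZeroExt.snd_inl, smul_eq_mul,
      op_smul_eq_mul, smul_zero, mul_zero, zero_mul, add_zero, zero_add]
  · exact (Polynomial.X_mul).symm
  · show C z.fst * 0 + C z.snd * X = X * C z.snd + 0 * C z.fst
    rw [mul_zero, zero_mul, zero_add, add_zero]
    exact (Polynomial.X_mul).symm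

/-- The main homomorphism `𝔻ℍ[X] → 𝔻(ℍ[X])`. -/
def Φ : Polynomial DH →+* DualNumber (Polynomial ℍ) :=
  Polynomial.eval₂RingHom' g (TrivSqZeroExt.inl Polynomial.X) hcomm

lemma Φ_apply (p : Polynomial DH) :
    Φ p = Polynomial.eval₂ g (TrivSqZeroExt.inl Polynomial.X) p := rfl

lemma Φ_X : Φ Polynomial.X = TrivSqZeroExt.inl Polynomial.X := by
  simp [Φ_apply]

lemma Φ_C (z : DH) : Φ (Polynomial.C z) = g z := by
  simp [Φ_apply]

/-- Left factors `X - a` with `a ≠ 0` can be cancelled against powers of `X`. -/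
lemma lemC (a : ℍ) (ha : a ≠ 0) :
    ∀ (j : ℕ) (P : Polynomial ℍ),
      (X : Polynomial ℍ) ^ j ∣ (X - C a) * P → (X : Polynomial ℍ) ^ j ∣ P := by
  intro j
  induction j with
  | zero => intro P _; simpa using one_dvd P
  | succ j ih =>
    intro P hP
    have hx : (X : Polynomial ℍ) ∣ (X - C a) * P :=
      dvd_trans (dvd_pow_self X (Nat.succ_ne_zero j)) hP
    rw [X_dvd_iff, mul_coeff_zero] at hx
    have hc : (X - C a : Polynomial ℍ).coeff 0 = -a := by simp
    rw [hc] at hx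
    have h0 : P.coeff 0 = 0 := by
      rcases mul_eq_zero.mp hx with h | h
      · exact absurd (neg_eq_zero.mp h) ha
      · exact h
    obtain ⟨P', hP'⟩ := X_dvd_iff.mpr h0
    rw [hP'] at hP ⊢
    have hre : ((X : Polynomial ℍ) - C a) * (X * P') = X * ((X - C a) * P') := by
      rw [← mul_assoc, ← Polynomial.X_mul, mul_assoc]
    rw [hre] at hP
    obtain ⟨r, hr⟩ := hP
    have hr' : (X : Polynomial ℍ) * ((X - C a) * P') = X * (X ^ j * r) := by
      rw [hr, pow_succ', mul_assoc]
    have hcan : ((X : Polynomial ℍ) - C a) * P' = X ^ j * r :=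
      mul_left_cancel₀ Polynomial.X_ne_zero hr'
    obtain ⟨s, hs⟩ := ih P' ⟨r, hcan⟩
    exact ⟨s, by rw [hs, pow_succ', mul_assoc]⟩

lemma dvd_mul_left' (u P : Polynomial ℍ) (m : ℕ)
    (h : (X : Polynomial ℍ) ^ m ∣ P) : (X : Polynomial ℍ) ^ m ∣ u * P := by
  obtain ⟨p, rfl⟩ := h
  exact ⟨u * p, by rw [← mul_assoc, ← Polynomial.X_pow_mul, mul_assoc]⟩

/-- Key induction: if `X^(m+1)` divides the primal part of a product of monic linear
dual-number polynomials, then `X^m` divides the dual part. -/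
lemma lemB :
    ∀ (l : List (DualNumber (Polynomial ℍ))),
      (∀ z ∈ l, ∃ a b : ℍ, z = ((X : Polynomial ℍ) - C a, C b)) →
      ∀ m : ℕ, (X : Polynomial ℍ) ^ (m + 1) ∣ (l.prod).fst →
        (X : Polynomial ℍ) ^ m ∣ (l.prod).snd := by
  intro l
  induction l with
  | nil =>
    intro _ m hm
    exfalso
    rw [List.prod_nil, TrivSqZeroExt.fst_one, X_pow_dvd_iff] at hm
    have := hm 0 (Nat.succ_pos m)
    simp at this
  | cons z l ih =>
    intro hz m hm
    obtain ⟨a, b, hab⟩ := hz _ List.mem_cons_self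
    have hl : ∀ w ∈ l, ∃ a b : ℍ, w = ((X : Polynomial ℍ) - C a, C b) :=
      fun w hw => hz w (List.mem_cons_of_mem _ hw)
    rw [List.prod_cons] at hm ⊢
    rw [TrivSqZeroExt.fst_mul, hab, TrivSqZeroExt.fst_mk] at hm
    rw [TrivSqZeroExt.snd_mul, hab, TrivSqZeroExt.fst_mk, TrivSqZeroExt.snd_mk,
      smul_eq_mul, op_smul_eq_mul]
    set P := (l.prod).fst with hPdef
    set Q := (l.prod).snd with hQdef
    by_cases ha : a = 0
    · subst ha
      rw [map_zero, sub_zero] at hm ⊢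
      have hP : (X : Polynomial ℍ) ^ m ∣ P := by
        obtain ⟨r, hr⟩ := hm
        refine ⟨r, mul_left_cancel₀ Polynomial.X_ne_zero ?_⟩
        rw [hr, pow_succ', mul_assoc]
      cases m with
      | zero => simpa using one_dvd _
      | succ m' =>
        have hQ : (X : Polynomial ℍ) ^ m' ∣ Q := ih hl m' hP
        refine dvd_add ?_ (dvd_mul_left' _ _ _ hP)
        obtain ⟨q, hq⟩ := hQ
        exact ⟨q, by rw [hq, pow_succ', mul_assoc]⟩
    · have hP : (X : Polynomial ℍ) ^ (m + 1) ∣ P := lemC a ha (m + 1) P hm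
      have hQ : (X : Polynomial ℍ) ^ m ∣ Q := ih hl m hP
      exact dvd_add (dvd_mul_left' _ _ _ hQ)
        (dvd_mul_left' _ _ _ (dvd_trans (pow_dvd_pow X (Nat.le_succ m)) hP))

end

end NoFactAux

/-- For the unbounded motion polynomial `F = t² + ε𝐢` and every monic quaternion
polynomial `D` (viewed in `𝔻ℍ[t]` with zero dual part), the product `F·D` admits no
factorization into linear factors. -/
theorem no_factorization_after_quaternion_multiplication
    (D : Polynomial (Quaternion ℝ)) (hD : D.Monic) :
    ¬ ∃ (n : ℕ) (h : Fin n → DH),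
      (X ^ 2 + Polynomial.C (dq 0 qi) : Polynomial DH) *
          D.map (TrivSqZeroExt.inlHom (Quaternion ℝ) (Quaternion ℝ)) =
        (List.ofFn fun i => X - Polynomial.C (h i)).prod := by
  classical
  rintro ⟨n, h, heq⟩
  have hDne : D ≠ 0 := hD.ne_zero
  set τ := D.natTrailingDegree with hτ
  -- apply Φ to both sides
  have heq' := congrArg NoFactAux.Φ heq
  rw [map_mul, map_list_prod] at heq'
  -- compute Φ of the left factor
  have hF1 : NoFactAux.Φ (X ^ 2 + Polynomial.C (dq 0 qi)) =
      ((X : Polynomial (Quaternion ℝ)) ^ 2, Polynomial.C qi) := by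
    rw [map_add, map_pow, NoFactAux.Φ_X, NoFactAux.Φ_C]
    have hpow : ((TrivSqZeroExt.inl (X : Polynomial (Quaternion ℝ)))
          ^ 2 : DualNumber (Polynomial (Quaternion ℝ)))
        = TrivSqZeroExt.inl ((X : Polynomial (Quaternion ℝ)) ^ 2) :=
      (map_pow (TrivSqZeroExt.inlHom _ _) X 2).symm
    rw [hpow, NoFactAux.g_apply]
    refine TrivSqZeroExt.ext ?_ ?_
    · simp only [TrivSqZeroExt.fst_add, TrivSqZeroExt.fst_inl, TrivSqZeroExt.fst_mk]
      show (X : Polynomial (Quaternion ℝ)) ^ 2 + Polynomial.C (dq 0 qi).fst = X ^ 2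
      have : (dq 0 qi).fst = 0 := rfl
      rw [this, Polynomial.C_0, add_zero]
    · simp only [TrivSqZeroExt.snd_add, TrivSqZeroExt.snd_inl, TrivSqZeroExt.snd_mk]
      show (0 : Polynomial (Quaternion ℝ)) + Polynomial.C (dq 0 qi).snd = Polynomial.C qi
      have : (dq 0 qi).snd = qi := rfl
      rw [this, zero_add]
  -- compute Φ of the mapped D
  have hF2 : NoFactAux.Φ (D.map (TrivSqZeroExt.inlHom (Quaternion ℝ) (Quaternion ℝ))) =
      TrivSqZeroExt.inl D := by
    rw [NoFactAux.Φ_apply, Polynomial.eval₂_map]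
    have hgc : (NoFactAux.g.comp (TrivSqZeroExt.inlHom (Quaternion ℝ) (Quaternion ℝ)))
        = (TrivSqZeroExt.inlHom (Polynomial (Quaternion ℝ)) (Polynomial (Quaternion ℝ))).comp
            Polynomial.C := by
      refine RingHom.ext fun a => TrivSqZeroExt.ext ?_ ?_ <;>
        simp [NoFactAux.g_apply, TrivSqZeroExt.fst_inl, TrivSqZeroExt.snd_inl,
          TrivSqZeroExt.fst_mk, TrivSqZeroExt.snd_mk]
    have hx : (TrivSqZeroExt.inl (Polynomial.X : Polynomial (Quaternion ℝ))
          : DualNumber (Polynomial (Quaternion ℝ)))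
        = (TrivSqZeroExt.inlHom (Polynomial (Quaternion ℝ)) (Polynomial (Quaternion ℝ)))
            Polynomial.X := rfl
    rw [hgc, hx, ← Polynomial.hom_eval₂, Polynomial.eval₂_C_X]
    rfl
  rw [hF1, hF2] at heq'
  -- the list on the right
  set l : List (DualNumber (Polynomial (Quaternion ℝ))) :=
    (List.ofFn fun i => X - Polynomial.C (h i)).map NoFactAux.Φ with hl
  have hshape : ∀ z ∈ l, ∃ a b : Quaternion ℝ,
      z = ((X : Polynomial (Quaternion ℝ)) - C a, C b) := by
    intro z hzl
    rw [hl, List.mem_map] at hzl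
    obtain ⟨p, hp, rfl⟩ := hzl
    rw [List.mem_ofFn] at hp
    obtain ⟨i, rfl⟩ := hp
    refine ⟨(h i).fst, -(h i).snd, ?_⟩
    rw [map_sub, NoFactAux.Φ_X, NoFactAux.Φ_C, NoFactAux.g_apply]
    refine TrivSqZeroExt.ext ?_ ?_
    · rfl
    · show (0 : Polynomial (Quaternion ℝ)) - C (h i).snd = C (-(h i).snd)
      rw [zero_sub, Polynomial.C_neg]
  -- extract the two component equations
  have hfst : (l.prod).fst = (X : Polynomial (Quaternion ℝ)) ^ 2 * D := by
    rw [← heq']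
    rfl
  have hsnd : (l.prod).snd = Polynomial.C qi * D := by
    rw [← heq']
    show (X : Polynomial (Quaternion ℝ)) ^ 2 * 0 + C qi * D = C qi * D
    rw [mul_zero, zero_add]
  -- divisibility of the primal part
  have hXτ : (X : Polynomial (Quaternion ℝ)) ^ τ ∣ D := by
    rw [X_pow_dvd_iff]
    intro d hd
    exact Polynomial.coeff_eq_zero_of_lt_natTrailingDegree hd
  have hdvd2 : (X : Polynomial (Quaternion ℝ)) ^ (τ + 1 + 1) ∣ (l.prod).fst := by
    rw [hfst]
    have he : τ + 1 + 1 = 2 + τ := by omega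
    rw [he, pow_add]
    exact mul_dvd_mul_left _ hXτ
  -- apply the key lemma
  have hkey := NoFactAux.lemB l hshape (τ + 1) hdvd2
  rw [hsnd, X_pow_dvd_iff] at hkey
  have hcoeff := hkey τ (Nat.lt_succ_self τ)
  rw [Polynomial.coeff_C_mul] at hcoeff
  have htc : D.coeff τ ≠ 0 := by
    have := Polynomial.trailingCoeff_nonzero_iff_nonzero.mpr hDne
    rwa [Polynomial.trailingCoeff, ← hτ] at this
  have hqi : qi ≠ 0 := by
    intro hq
    have := congrArg QuaternionAlgebra.imI hq
    simp [qi, Quaternion.imI_zero] at this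
  exact (mul_ne_zero hqi htc) hcoeff
end
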